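/- For every integer n ≥ 2, the ℚ-vector space of identities, i.e. of tuples (a_1,…,a_m) ∈ ℚ^m with Σ_{j=1}^m a_j sin(jπ/n) = 0 and Σ_{j=1}^m a_j = 0, has dimension max{0, m − φ(2n)/2 − 1}, where m = ⌊n/2⌋ and φ is Euler's totient function. -/

import Mathlib

/-- The `ℚ`-linear map sending `(a_1,…,a_m)` (with `m = ⌊n/2⌋`) to
`∑_{j=1}^m a_j • sin (jπ/n) : ℝ`. -/
noncomputable def sinSum (n : ℕ) : (Fin (n / 2) → ℚ) →ₗ[ℚ] ℝ :=
  ∑ j : Fin (n / 2),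
    (LinearMap.proj j : (Fin (n / 2) → ℚ) →ₗ[ℚ] ℚ).smulRight
      (Real.sin ((j.1 + 1) * Real.pi / n))

/-- The `ℚ`-linear map sending `(a_1,…,a_m)` to `∑_{j=1}^m a_j`. -/
def coordSum (n : ℕ) : (Fin (n / 2) → ℚ) →ₗ[ℚ] ℚ :=
  ∑ j : Fin (n / 2), (LinearMap.proj j : (Fin (n / 2) → ℚ) →ₗ[ℚ] ℚ)


section SinDimAux
open Complex Polynomial Module IntermediateField
set_option maxHeartbeats 1600000
set_option synthInstance.maxHeartbeats 400000

lemma sinSum_apply (n : ℕ) (a : Fin (n/2) → ℚ) :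
    sinSum n a = ∑ j : Fin (n/2), a j • Real.sin ((j.1 + 1) * Real.pi / n) := by
  simp [sinSum]

lemma coordSum_apply (n : ℕ) (a : Fin (n/2) → ℚ) :
    coordSum n a = ∑ j : Fin (n/2), a j := by
  simp [coordSum]

lemma sin_single (n : ℕ) (j : Fin (n/2)) :
    sinSum n (Pi.single j 1) = Real.sin ((j.1 + 1) * Real.pi / n) := by
  rw [sinSum_apply]
  rw [Finset.sum_eq_single j]
  · simp
  · intro b _ hb; simp [Pi.single_apply, hb]
  · intro h; exact absurd (Finset.mem_univ j) h

lemma red1 (n : ℕ) (hn : 2 ≤ n) (t : ℕ) (h1 : 1 ≤ t) (h2 : t < n) :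
    ∃ j : Fin (n/2), Real.sin (t * Real.pi / n) = Real.sin ((j.1 + 1) * Real.pi / n) := by
  by_cases h : t ≤ n/2
  · refine ⟨⟨t-1, by omega⟩, ?_⟩
    congr 2
    push_cast [Nat.cast_sub h1]
    ring
  · refine ⟨⟨n-t-1, by omega⟩, ?_⟩
    have harg : ((n-t-1 : ℕ) : ℝ) + 1 = (n : ℝ) - t := by
      rw [Nat.cast_sub (by omega : 1 ≤ n - t), Nat.cast_sub (by omega : t ≤ n)]
      push_cast; ring
    rw [harg]
    have hn0 : (n : ℝ) ≠ 0 := by exact_mod_cast (by omega : n ≠ 0)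
    have : ((n : ℝ) - t) * Real.pi / n = Real.pi - t * Real.pi / n := by
      field_simp
    rw [this, Real.sin_pi_sub]

lemma red (n : ℕ) (hn : 2 ≤ n) (t : ℕ) (h1 : 1 ≤ t) (h2 : t < 2*n) (h3 : t ≠ n) :
    ∃ j : Fin (n/2), Real.sin (t * Real.pi / n) =
      (if t < n then (1:ℝ) else -1) * Real.sin ((j.1 + 1) * Real.pi / n) := by
  by_cases h : t < n
  · obtain ⟨j, hj⟩ := red1 n hn t h1 h
    exact ⟨j, by rw [if_pos h, one_mul, hj]⟩
  · have hgt : n < t := by omega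
    obtain ⟨j, hj⟩ := red1 n hn (t - n) (by omega) (by omega)
    refine ⟨j, ?_⟩
    rw [if_neg h]
    have hn0 : (n : ℝ) ≠ 0 := by exact_mod_cast (by omega : n ≠ 0)
    have harg : (t : ℝ) * Real.pi / n = ((t - n : ℕ) : ℝ) * Real.pi / n + Real.pi := by
      push_cast [Nat.cast_sub (by omega : n ≤ t)]
      field_simp; ring
    rw [harg, Real.sin_add_pi, hj]
    ring

lemma sinDimClaim (n p : ℕ) (hn : 2 ≤ n) (hp : p.Prime) (hdvd : p ∣ n) :
    ∑ k ∈ Finset.range p, Real.sin (((1 + (2*n/p)*k : ℕ) : ℝ) * Real.pi / n) = 0 := by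
  set d := 2*n/p with hddef
  have hpd : p * d = 2*n := Nat.mul_div_cancel' (Dvd.dvd.mul_left hdvd 2)
  have hp0 : (p:ℝ) ≠ 0 := by exact_mod_cast hp.ne_zero
  have hn0 : (n:ℝ) ≠ 0 := by exact_mod_cast (by omega : n ≠ 0)
  have hζp := Complex.isPrimitiveRoot_exp p hp.ne_zero
  have hgeom : ∑ k ∈ Finset.range p, Complex.exp (2*↑Real.pi*I/p) ^ k = 0 :=
    hζp.geom_sum_eq_zero hp.one_lt
  have hdr : (d:ℝ) * Real.pi / n = 2*Real.pi/p := by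
    rw [div_eq_div_iff hn0 hp0]
    have h : (p:ℝ) * d = 2*n := by exact_mod_cast hpd
    linear_combination Real.pi * h
  have hdrC : (d:ℂ) * (Real.pi:ℂ) / n = 2*(Real.pi:ℂ)/p := by exact_mod_cast hdr
  have hterm : ∀ k, Complex.exp (((1 + d*k : ℕ) : ℝ) * Real.pi / n * I)
      = Complex.exp ((Real.pi : ℝ)/(n:ℝ) * I) * Complex.exp (2*↑Real.pi*I/p) ^ k := by
    intro k
    rw [← Complex.exp_nat_mul, ← Complex.exp_add]
    congr 1
    push_cast
    linear_combination ((k:ℂ) * I) * hdrC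
  have him : ∀ k, Real.sin (((1+d*k:ℕ):ℝ) * Real.pi / n)
      = (Complex.exp (((1+d*k:ℕ):ℝ) * Real.pi / n * I)).im := by
    intro k
    rw [show ((((1+d*k:ℕ):ℝ) : ℂ) * (Real.pi:ℂ) / (n:ℂ) * I : ℂ)
        = ((((1+d*k:ℕ):ℝ) * Real.pi / n : ℝ) : ℂ) * I by push_cast; ring,
      Complex.exp_ofReal_mul_I_im]
  calc ∑ k ∈ Finset.range p, Real.sin (((1 + d*k : ℕ) : ℝ) * Real.pi / n)
      = ∑ k ∈ Finset.range p, (Complex.exp (((1+d*k:ℕ):ℝ) * Real.pi / n * I)).im := by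
        exact Finset.sum_congr rfl fun k _ => him k
    _ = (∑ k ∈ Finset.range p, Complex.exp (((1+d*k:ℕ):ℝ) * Real.pi / n * I)).im := by
        rw [Complex.im_sum]
    _ = (Complex.exp ((Real.pi : ℝ)/(n:ℝ) * I) * ∑ k ∈ Finset.range p,
          Complex.exp (2*↑Real.pi*I/p) ^ k).im := by
        rw [Finset.mul_sum]
        congr 1
        exact Finset.sum_congr rfl fun k _ => hterm k
    _ = 0 := by rw [hgeom, mul_zero, Complex.zero_im]

lemma relation_exists (n : ℕ) (hn : 2 ≤ n) (p : ℕ) (hp : p.Prime) (hodd : p % 2 = 1)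
    (hdvd : p ∣ n) (hlt : p < n) :
    ∃ a : Fin (n/2) → ℚ, sinSum n a = 0 ∧ coordSum n a ≠ 0 := by
  classical
  set d := 2*n/p with hddef
  have hpd : p * d = 2*n := Nat.mul_div_cancel' (Dvd.dvd.mul_left hdvd 2)
  have hd2 : 2 ≤ d := by
    rcases Nat.lt_or_ge d 2 with h | h
    · interval_cases d <;> omega
    · exact h
  have hm1 : 0 < n/2 := by omega
  -- bounds for t k := 1 + d*k, k < p
  have hbound : ∀ k, k < p → 1 + d*k < 2*n := by
    intro k hk
    have h1 : d*(k+1) ≤ d*p := Nat.mul_le_mul_left d hk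
    have h2 : d*(k+1) = d*k + d := by ring
    have h3 : d*p = p*d := Nat.mul_comm d p
    omega
  have hnen : ∀ k, k < p → 1 + d*k ≠ n := by
    intro k hk hcon
    have h1 : (1:ℤ) + d*k = n := by exact_mod_cast hcon
    have h2 : (p:ℤ) * d = 2*n := by exact_mod_cast hpd
    have h3 : (p:ℤ) = n * (p - 2*k) := by linear_combination (p:ℤ) * h1 - (k:ℤ) * h2
    have h4 : (n:ℤ) ∣ p := ⟨p - 2*k, h3⟩
    have h5 : n ∣ p := by exact_mod_cast h4
    have := Nat.le_of_dvd hp.pos h5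
    omega
  -- choose reduced indices
  have hred : ∀ k : ℕ, k < p → ∃ j : Fin (n/2),
      Real.sin ((1 + d*k : ℕ) * Real.pi / n) =
      (if 1 + d*k < n then (1:ℝ) else -1) * Real.sin ((j.1 + 1) * Real.pi / n) :=
    fun k hk => red n hn _ (by omega) (hbound k hk) (hnen k hk)
  let J : ℕ → Fin (n/2) := fun k => if h : k < p then (hred k h).choose else ⟨0, hm1⟩
  let χ : ℕ → ℚ := fun k => if 1 + d*k < n then 1 else -1
  let a : Fin (n/2) → ℚ := fun j => ∑ k ∈ Finset.range p, if J k = j then χ k else 0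
  refine ⟨a, ?_, ?_⟩
  · rw [sinSum_apply]
    have hswap : ∑ j : Fin (n/2), a j • Real.sin ((j.1 + 1) * Real.pi / n)
        = ∑ k ∈ Finset.range p, ∑ j : Fin (n/2),
            (if J k = j then χ k else 0) • Real.sin ((j.1 + 1) * Real.pi / n) := by
      rw [Finset.sum_comm]
      refine Finset.sum_congr rfl fun j _ => ?_
      rw [show a j = ∑ k ∈ Finset.range p, if J k = j then χ k else 0 from rfl,
        Finset.sum_smul]
    rw [hswap]
    have hinner : ∀ k ∈ Finset.range p,
        (∑ j : Fin (n/2), (if J k = j then χ k else 0) • Real.sin ((j.1 + 1) * Real.pi / n))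
        = Real.sin ((1 + d*k : ℕ) * Real.pi / n) := by
      intro k hk
      rw [Finset.mem_range] at hk
      rw [Finset.sum_eq_single (J k)]
      · rw [if_pos rfl]
        have hspec := (hred k hk).choose_spec
        have hJ : J k = (hred k hk).choose := dif_pos hk
        rw [hJ]
        have hgoal : (χ k : ℚ) • Real.sin (((((hred k hk).choose : Fin (n/2)) : ℕ) + 1) * Real.pi / n)
            = (if 1 + d*k < n then (1:ℝ) else -1)
              * Real.sin (((((hred k hk).choose : Fin (n/2)) : ℕ) + 1) * Real.pi / n) := by
          by_cases hc : 1 + d*k < n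
          · simp [χ, hc]
          · simp [χ, hc]
        exact hgoal.trans hspec.symm
      · intro b _ hb
        rw [if_neg (Ne.symm hb), zero_smul]
      · intro h; exact absurd (Finset.mem_univ (J k)) h
    rw [Finset.sum_congr rfl hinner]
    exact sinDimClaim n p hn hp hdvd
  · rw [coordSum_apply]
    have hswap : ∑ j : Fin (n/2), a j = ∑ k ∈ Finset.range p, χ k := by
      rw [Finset.sum_comm]
      exact Finset.sum_congr rfl fun k _ => by
        rw [Finset.sum_eq_single (J k)]
        · exact if_pos rfl
        · intro b _ hb; exact if_neg (Ne.symm hb)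
        · intro h; exact absurd (Finset.mem_univ (J k)) h
    rw [hswap]
    -- parity: sum of p many ±1's is odd, hence nonzero
    have hint : ∑ k ∈ Finset.range p, χ k
        = ((∑ k ∈ Finset.range p, if 1 + d*k < n then (1:ℤ) else -1 : ℤ) : ℚ) := by
      push_cast
      refine Finset.sum_congr rfl fun k _ => ?_
      by_cases hc : 1 + d*k < n <;> simp [χ, hc]
    rw [hint]
    intro hcon
    have h0 : (∑ k ∈ Finset.range p, if 1 + d*k < n then (1:ℤ) else -1) = 0 := by
      exact_mod_cast hcon
    have h1 : ((∑ k ∈ Finset.range p, if 1 + d*k < n then (1:ℤ) else -1 : ℤ) : ZMod 2)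
        = (p : ZMod 2) := by
      rw [Int.cast_sum]
      have hall : ∀ k ∈ Finset.range p,
          ((if 1 + d*k < n then (1:ℤ) else -1 : ℤ) : ZMod 2) = 1 := by
        intro k _
        by_cases hc : 1 + d*k < n <;> simp [hc] <;> decide
      rw [Finset.sum_congr rfl hall, Finset.sum_const, Finset.card_range, nsmul_eq_mul, mul_one]
    rw [h0] at h1
    have hp2 : (p : ZMod 2) = 1 := by
      have : ((p % 2 : ℕ) : ZMod 2) = (p : ZMod 2) := ZMod.natCast_mod p 2 ▸ rfl
      rw [← this, hodd]
      decide
    rw [hp2] at h1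
    exact absurd h1.symm (by decide)

lemma key (n : ℕ) (hn : 2 ≤ n) :
    2 * finrank ℚ ↥(LinearMap.range (sinSum n)) = (2*n).totient := by
  classical
  have hN0 : 0 < 2*n := by omega
  set N : ℕ+ := ⟨2*n, hN0⟩ with hNdef
  have hζ := Complex.isPrimitiveRoot_exp (2*n) (by omega)
  set ζ : ℂ := Complex.exp (2*↑Real.pi*I/((2*n : ℕ) : ℂ)) with hzdef
  have hint : IsIntegral ℚ ζ := (hζ.isIntegral (by omega)).tower_top
  set K : IntermediateField ℚ ℂ := ℚ⟮ζ⟯ with hK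
  let pb : PowerBasis ℚ K := IntermediateField.adjoin.powerBasis hint
  have hsub : K.toSubalgebra = Algebra.adjoin ℚ {ζ} :=
    IntermediateField.adjoin_simple_toSubalgebra_of_isAlgebraic hint.isAlgebraic
  have hζ' : IsPrimitiveRoot ζ (N : ℕ) := hζ
  haveI : NeZero (N : ℕ) := ⟨N.ne_zero⟩
  haveI i1 : IsCyclotomicExtension {(N : ℕ)} ℚ (Algebra.adjoin ℚ ({ζ} : Set ℂ)) :=
    hζ'.adjoin_isCyclotomicExtension ℚ
  haveI i2 : IsCyclotomicExtension {(N : ℕ)} ℚ K :=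
    IsCyclotomicExtension.equiv _ ℚ _ (Subalgebra.equivOfEq _ _ hsub.symm)
  haveI i3 : IsGalois ℚ K := IsCyclotomicExtension.isGalois {(N : ℕ)} ℚ K
  haveI i4 : FiniteDimensional ℚ K := pb.finite
  have hdeg : finrank ℚ K = (2*n).totient := by
    have := IsCyclotomicExtension.finrank (n := (N : ℕ)) K
      (cyclotomic.irreducible_rat (n := 2*n) (by omega))
    exact this
  -- im of powers of ζ
  have hpow : ∀ i : ℕ, (ζ^i).im = Real.sin (i * Real.pi / n) := by
    intro i
    have harg : (i : ℂ) * (2*↑Real.pi*I/((2*n : ℕ) : ℂ)) = ((i * Real.pi / n : ℝ) : ℂ) * I := by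
      have hne : ((2*n : ℕ) : ℂ) ≠ 0 := by exact_mod_cast (by omega : (2*n : ℕ) ≠ 0)
      have hne2 : (n : ℂ) ≠ 0 := by exact_mod_cast (by omega : n ≠ 0)
      push_cast
      push_cast at hne
      field_simp
    rw [hzdef, ← Complex.exp_nat_mul, harg, Complex.exp_ofReal_mul_I_im]
  -- conjugation
  let σc : ℂ ≃ₐ[ℚ] ℂ := Complex.conjAe.restrictScalars ℚ
  let σ : K ≃ₐ[ℚ] K := σc.restrictNormal K
  have hσ : ∀ x : K, (↑(σ x) : ℂ) = (starRingEnd ℂ) ↑x := by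
    intro x
    exact AlgEquiv.restrictNormal_commutes σc K x
  have hzim0 : ζ.im ≠ 0 := by
    have := hpow 1
    rw [pow_one] at this
    rw [this]
    simp only [Nat.cast_one]
    have h1 : 0 < 1 * Real.pi / n := by positivity
    have h2 : (1:ℝ) * Real.pi / n < Real.pi := by
      rw [one_mul]
      apply div_lt_self Real.pi_pos
      exact_mod_cast by omega
    exact ne_of_gt (Real.sin_pos_of_pos_of_lt_pi h1 h2)
  have hσne : σ ≠ 1 := by
    intro h
    have h2 : (↑(σ (AdjoinSimple.gen ℚ ζ)) : ℂ) = ζ := by rw [h]; rfl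
    rw [hσ] at h2
    exact hzim0 ((Complex.conj_eq_iff_im).mp h2)
  have hσ2 : σ ^ 2 = 1 := by
    ext x
    have h3 : (↑((σ^2) x) : ℂ) = ↑x := by
      rw [pow_two]
      rw [show ((σ * σ) x) = σ (σ x) from rfl, hσ, hσ]
      simp
    exact_mod_cast h3
  haveI : Fact (Nat.Prime 2) := ⟨by norm_num⟩
  have horder : orderOf σ = 2 := orderOf_eq_prime hσ2 hσne
  set G := Subgroup.zpowers σ with hGdef
  haveI : Fintype G := Fintype.ofFinite G
  have hcard : Fintype.card G = 2 := by
    rw [← Nat.card_eq_fintype_card, hGdef, Nat.card_zpowers, horder]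
  haveI : FaithfulSMul G K := ⟨fun {g₁ g₂} h => Subtype.ext (AlgEquiv.ext h)⟩
  set F := FixedPoints.subfield G K with hFdef
  have hFK : finrank F K = 2 := by rw [hFdef, FixedPoints.finrank_eq_card G K, hcard]
  have htower : finrank ℚ F * finrank F K = finrank ℚ K := Module.finrank_mul_finrank ℚ F K
  -- the Im linear map
  set ImK : K →ₗ[ℚ] ℝ :=
    (Complex.imLm.restrictScalars ℚ).comp (K.val.toLinearMap) with hImKdef
  have hImK : ∀ x : K, ImK x = (x : ℂ).im := fun x => rfl
  have hmem : ∀ x : K, x ∈ LinearMap.ker ImK ↔ x ∈ F := by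
    intro x
    have h1 : σ x = x ↔ (x : ℂ).im = 0 := by
      constructor
      · intro h
        have hh := hσ x
        rw [h] at hh
        exact Complex.conj_eq_iff_im.mp hh.symm
      · intro h
        have h2 : (↑(σ x) : ℂ) = ↑x := by rw [hσ x]; exact Complex.conj_eq_iff_im.mpr h
        exact Subtype.ext h2
    constructor
    · intro h g
      have hx : σ x = x := h1.mpr (by simpa [hImK] using h)
      have hst : σ ∈ MulAction.stabilizer (K ≃ₐ[ℚ] K) x := hx
      have hle : Subgroup.zpowers σ ≤ MulAction.stabilizer (K ≃ₐ[ℚ] K) x :=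
        (Subgroup.zpowers_le).mpr hst
      exact hle g.2
    · intro h
      have hx : σ x = x := h ⟨σ, Subgroup.mem_zpowers σ⟩
      simp only [LinearMap.mem_ker, hImK]
      exact h1.mp hx
  let e : ↥(LinearMap.ker ImK) ≃ₗ[ℚ] F :=
    { toFun := fun x => ⟨x.1, (hmem x.1).mp x.2⟩
      invFun := fun y => ⟨y.1, (hmem y.1).mpr y.2⟩
      map_add' := fun a b => rfl
      map_smul' := fun c a => rfl
      left_inv := fun a => rfl
      right_inv := fun a => rfl }
  have hker : finrank ℚ ↥(LinearMap.ker ImK) = finrank ℚ F := e.finrank_eq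
  -- range of ImK = range of sinSum
  have hzmem : ζ ∈ K := IntermediateField.mem_adjoin_simple_self ℚ ζ
  have hgen : ((pb.gen : K) : ℂ) = ζ := rfl
  have hrange : LinearMap.range ImK = LinearMap.range (sinSum n) := by
    apply le_antisymm
    · rintro x ⟨y, rfl⟩
      have hy := pb.basis.sum_repr y
      rw [← hy, map_sum]
      apply Submodule.sum_mem
      intro i _
      rw [map_smul]
      apply Submodule.smul_mem
      -- ImK (pb.basis i) = sin (i π / n)
      have hb : ImK (pb.basis i) = Real.sin ((i : ℕ) * Real.pi / n) := by
        rw [pb.basis_eq_pow i, hImK]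
        have : ((pb.gen ^ (i:ℕ) : K) : ℂ) = ζ ^ (i:ℕ) := by
          push_cast [hgen]
          rfl
        rw [this, hpow]
      rw [hb]
      -- now reduce
      have hilt : (i : ℕ) < pb.dim := i.2
      have hdim : pb.dim = (2*n).totient := by
        have := pb.finrank
        omega
      have hi2n : (i : ℕ) < 2*n := by
        have := Nat.totient_lt (2*n) (by omega)
        omega
      rcases Nat.eq_zero_or_pos (i : ℕ) with h0 | hpos
      · rw [h0]
        simp
      · by_cases hin : (i : ℕ) = n
        · rw [hin]
          have : (n : ℝ) * Real.pi / n = Real.pi := by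
            field_simp
          rw [this, Real.sin_pi]
          exact Submodule.zero_mem _
        · obtain ⟨j, hj⟩ := red n hn (i:ℕ) hpos hi2n hin
          rw [hj]
          have hmemr : Real.sin (((j:ℕ) + 1) * Real.pi / n) ∈ LinearMap.range (sinSum n) :=
            ⟨Pi.single j 1, sin_single n j⟩
          have hc : (if (i:ℕ) < n then (1:ℝ) else -1) * Real.sin (((j:ℕ) + 1) * Real.pi / n)
              = ((if (i:ℕ) < n then (1:ℚ) else -1) : ℚ) • Real.sin (((j:ℕ) + 1) * Real.pi / n) := by
            by_cases hc' : (i:ℕ) < n <;> simp [hc']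
          rw [hc]
          exact Submodule.smul_mem _ _ hmemr
    · rintro x ⟨a, rfl⟩
      rw [sinSum_apply]
      apply Submodule.sum_mem
      intro j _
      apply Submodule.smul_mem
      refine ⟨⟨ζ^((j:ℕ)+1), pow_mem hzmem _⟩, ?_⟩
      rw [hImK]
      show (ζ^((j:ℕ)+1)).im = _
      rw [hpow]
      push_cast
      ring_nf
  -- rank nullity
  have hrn : finrank ℚ ↥(LinearMap.range ImK) + finrank ℚ ↥(LinearMap.ker ImK)
      = finrank ℚ K := LinearMap.finrank_range_add_finrank_ker ImK
  rw [hrange, hker] at hrn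
  rw [hFK] at htower
  omega

lemma NT (n : ℕ) (hn : 2 ≤ n) :
    n / 2 = (2*n).totient / 2 ∨ ∃ p, p.Prime ∧ p % 2 = 1 ∧ p ∣ n ∧ p < n := by
  by_cases hex : ∃ p, p.Prime ∧ p % 2 = 1 ∧ p ∣ n ∧ p < n
  · exact Or.inr hex
  left
  push_neg at hex
  by_cases hprime : n.Prime
  · rcases Nat.Prime.eq_two_or_odd hprime with h2 | hodd
    · subst h2
      decide
    · have hcop : Nat.Coprime 2 n := (Nat.Prime.coprime_iff_not_dvd Nat.prime_two).mpr (by omega)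
      rw [Nat.totient_mul hcop, Nat.totient_two, one_mul, Nat.totient_prime hprime]
      omega
  · -- all prime factors are 2
    have hall : ∀ q, q.Prime → q ∣ n → q = 2 := by
      intro q hq hdvd
      by_contra hq2
      have hodd : q % 2 = 1 := ((Nat.Prime.eq_two_or_odd hq).resolve_left hq2)
      have hlt : q < n := by
        rcases lt_or_eq_of_le (Nat.le_of_dvd (by omega) hdvd) with h | h
        · exact h
        · exact absurd (h ▸ hq) hprime
      exact absurd hlt (by
        have := hex q hq hodd hdvd
        omega)
  -- n = 2 ^ k
    have hpow : n = 2 ^ n.primeFactorsList.length :=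
      Nat.eq_prime_pow_of_unique_prime_dvd (by omega) (fun hq hdvd => hall _ hq hdvd)
    set k := n.primeFactorsList.length with hk
    have hk1 : 1 ≤ k := by
      by_contra h
      push_neg at h
      interval_cases k
      · simp at hpow; omega
    have h2n : 2*n = 2^(k+1) := by rw [hpow]; ring
    rw [h2n, Nat.totient_prime_pow Nat.prime_two (by omega)]
    have : 2^(k+1-1) * (2-1) = 2^k := by simp
    rw [this]
    rw [hpow]

/-- The `ℚ`-vector space of identities, i.e. of tuples `(a_1,…,a_m) ∈ ℚ^m`
(`m = ⌊n/2⌋`) with `∑_j a_j sin (jπ/n) = 0` and `∑_j a_j = 0`, has dimension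
`max 0 (m - φ(2n)/2 - 1)`. -/
theorem identity_space_dimension (n : ℕ) (hn : 2 ≤ n) :
    ((Module.finrank ℚ
        ↥(LinearMap.ker (sinSum n) ⊓ LinearMap.ker (coordSum n))) : ℤ) =
      max 0 (((n / 2 : ℕ) : ℤ) - ((Nat.totient (2 * n) : ℤ) / 2) - 1) := by

  classical
  have hkey := key n hn
  set r := finrank ℚ ↥(LinearMap.range (sinSum n)) with hr
  set W := LinearMap.ker (sinSum n) with hW
  have hdom : finrank ℚ (Fin (n/2) → ℚ) = n/2 := by
    rw [Module.finrank_pi]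
    simp
  have hrn : r + finrank ℚ ↥W = n/2 := by
    rw [hr, hW, LinearMap.finrank_range_add_finrank_ker, hdom]
  -- restriction of coordSum to W
  set f : ↥W →ₗ[ℚ] ℚ := (coordSum n).domRestrict W with hf
  have hkerf : LinearMap.ker f = Submodule.comap W.subtype (W ⊓ LinearMap.ker (coordSum n)) := by
    rw [hf, LinearMap.ker_domRestrict]
    rw [Submodule.comap_inf, Submodule.comap_subtype_self]
    rw [top_inf_eq]
  have hkfr : finrank ℚ ↥(LinearMap.ker f)
      = finrank ℚ ↥(W ⊓ LinearMap.ker (coordSum n)) := by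
    rw [hkerf]
    exact (Submodule.comapSubtypeEquivOfLe inf_le_left).finrank_eq
  have hrnf : finrank ℚ ↥(LinearMap.range f) + finrank ℚ ↥(LinearMap.ker f)
      = finrank ℚ ↥W := LinearMap.finrank_range_add_finrank_ker f
  have htot : ((2*n).totient : ℤ) / 2 = (r : ℤ) := by omega
  rw [htot]
  rcases NT n hn with heq | ⟨p, hp, hodd, hdvd, hlt⟩
  · -- m = r : kernel trivial
    have hmr : n/2 = r := by omega
    have hW0 : finrank ℚ ↥W = 0 := by omega
    have hWbot : W = ⊥ := by
      haveI : FiniteDimensional ℚ ↥W := inferInstance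
      exact Submodule.finrank_eq_zero.mp hW0
    have hinf : W ⊓ LinearMap.ker (coordSum n) = ⊥ := by
      rw [hWbot, bot_inf_eq]
    rw [hinf]
    rw [finrank_bot]
    rw [show ((0:ℕ):ℤ) = 0 from rfl]
    rw [max_eq_left (by omega)]
  · obtain ⟨a, haW, hasum⟩ := relation_exists n hn p hp hodd hdvd hlt
    have haW' : a ∈ W := by rw [hW]; exact haW
    have hfne : f ≠ 0 := by
      intro h0
      apply hasum
      have : f ⟨a, haW'⟩ = 0 := by rw [h0]; rfl
      exact this
    have hrangef : finrank ℚ ↥(LinearMap.range f) = 1 := by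
      have hle : finrank ℚ ↥(LinearMap.range f) ≤ 1 := by
        have := Submodule.finrank_le (LinearMap.range f)
        simpa using this
      have hne : LinearMap.range f ≠ ⊥ := by
        intro hbot
        exact hfne (LinearMap.range_eq_bot.mp hbot)
      have hge : finrank ℚ ↥(LinearMap.range f) ≠ 0 := by
        intro h0
        exact hne (Submodule.finrank_eq_zero.mp h0)
      omega
    have hane : a ≠ 0 := fun h => hasum (by rw [h]; exact map_zero _)
    have hWne : finrank ℚ ↥W ≠ 0 := by
      intro h0
      have hWbot : W = ⊥ := Submodule.finrank_eq_zero.mp h0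
      rw [hWbot] at haW'
      exact hane (Submodule.mem_bot ℚ |>.mp haW')
    rw [← hkfr]
    rw [max_eq_right (by omega)]
    omega

end SinDimAux
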